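/- Let 𝔏 = ⊕_{n∈ℤ} 𝔏_n and 𝔏' = ⊕_{n∈ℤ} 𝔏'_n be graded Lie algebras over ℂ, equipped with bilinear forms B and B' on their local parts, each satisfying conditions (i)–(v). Then every isomorphism of local Lie algebras σ̂ : 𝔏_{−1} ⊕ 𝔏₀ ⊕ 𝔏₁ → 𝔏'_{−1} ⊕ 𝔏'₀ ⊕ 𝔏'₁ (i.e. a degree-preserving linear isomorphism commuting with all brackets between local components) extends to an isomorphism of graded Lie algebras 𝔏 ≅ 𝔏'. In particular, for a given local part satisfying these conditions, the graded Lie algebra satisfying conditions (i)–(v) is unique up to isomorphism. -/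

import Mathlib

namespace Stmt2Aux

open Submodule

variable {L : Type} [LieRing L] [LieAlgebra ℂ L] {L' : Type} [LieRing L'] [LieAlgebra ℂ L']

theorem memG {G : ℤ → Submodule ℂ L} {i j : ℤ} (h : i = j) {x : L} (hx : x ∈ G i) :
    x ∈ G j := h ▸ hx

theorem mem3 {i : ℤ} (h : i = -1 ∨ i = 0 ∨ i = 1) : i ∈ ({-1, 0, 1} : Set ℤ) := by
  rcases h with h | h | h <;> simp [h]

/-- The invariant properties carried by the degree-`n` component map. -/
structure Qp (G : ℤ → Submodule ℂ L) (G' : ℤ → Submodule ℂ L') (σ : L →ₗ[ℂ] L')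
    (n : ℤ) (f : L → L') : Prop where
  range : ∀ x ∈ G n, f x ∈ G' n
  add : ∀ x ∈ G n, ∀ y ∈ G n, f (x + y) = f x + f y
  smul : ∀ (c : ℂ), ∀ x ∈ G n, f (c • x) = c • f x
  equiv0 : ∀ a ∈ G 0, ∀ u ∈ G n, f ⁅a, u⁆ = ⁅σ a, f u⁆
  du : ∀ u ∈ G n, ∀ z ∈ G (-1), ∀ x ∈ G 1, ⁅σ x, ⁅f u, σ z⁆⁆ = f ⁅x, ⁅u, z⁆⁆

theorem Qp.zero {G : ℤ → Submodule ℂ L} {G' : ℤ → Submodule ℂ L'} {σ : L →ₗ[ℂ] L'}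
    {n : ℤ} {f : L → L'} (hf : Qp G G' σ n f) : f 0 = 0 := by
  have := hf.smul 0 0 (zero_mem _)
  simpa using this

theorem Qp.sub {G : ℤ → Submodule ℂ L} {G' : ℤ → Submodule ℂ L'} {σ : L →ₗ[ℂ] L'}
    {n : ℤ} {f : L → L'} (hf : Qp G G' σ n f) {x y : L} (hx : x ∈ G n) (hy : y ∈ G n) :
    f (x - y) = f x - f y := by
  have h1 : x - y = x + (-1 : ℂ) • y := by
    rw [neg_one_smul, sub_eq_add_neg]
  rw [h1, hf.add x hx _ (Submodule.smul_mem _ _ hy), hf.smul (-1) y hy, neg_one_smul,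
    ← sub_eq_add_neg]

/-- All the hypotheses needed for the one-sided (positive-degree) construction. -/
structure Hyp (G : ℤ → Submodule ℂ L) (G' : ℤ → Submodule ℂ L') (σ : L →ₗ[ℂ] L') : Prop where
  gr : ∀ i j : ℤ, ∀ x ∈ G i, ∀ y ∈ G j, ⁅x, y⁆ ∈ G (i + j)
  gr' : ∀ i j : ℤ, ∀ x ∈ G' i, ∀ y ∈ G' j, ⁅x, y⁆ ∈ G' (i + j)
  sp : ∀ i : ℤ, 1 ≤ i →
    G (i + 1) = Submodule.span ℂ {z : L | ∃ x ∈ G 1, ∃ y ∈ G i, z = ⁅x, y⁆}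
  sp' : ∀ i : ℤ, 1 ≤ i →
    G' (i + 1) = Submodule.span ℂ {z : L' | ∃ x ∈ G' 1, ∃ y ∈ G' i, z = ⁅x, y⁆}
  tr : ∀ i : ℤ, 2 ≤ i → ∀ x ∈ G i, (∀ y ∈ G (-1), ⁅x, y⁆ = 0) → x = 0
  tr' : ∀ i : ℤ, 2 ≤ i → ∀ x ∈ G' i, (∀ y ∈ G' (-1), ⁅x, y⁆ = 0) → x = 0
  map : ∀ i ∈ ({-1, 0, 1} : Set ℤ), Submodule.map σ (G i) = G' i
  inj : ∀ i ∈ ({-1, 0, 1} : Set ℤ), ∀ x ∈ G i, σ x = 0 → x = 0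
  br : ∀ i ∈ ({-1, 0, 1} : Set ℤ), ∀ j ∈ ({-1, 0, 1} : Set ℤ), i + j ∈ ({-1, 0, 1} : Set ℤ) →
      ∀ x ∈ G i, ∀ y ∈ G j, σ ⁅x, y⁆ = ⁅σ x, σ y⁆

variable {G : ℤ → Submodule ℂ L} {G' : ℤ → Submodule ℂ L'} {σ : L →ₗ[ℂ] L'}

theorem Hyp.mapmem (h : Hyp G G' σ) {i : ℤ} (hi : i ∈ ({-1, 0, 1} : Set ℤ)) {x : L}
    (hx : x ∈ G i) : σ x ∈ G' i := by
  rw [← h.map i hi]; exact Submodule.mem_map_of_mem hx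

theorem Hyp.surjOn (h : Hyp G G' σ) {i : ℤ} (hi : i ∈ ({-1, 0, 1} : Set ℤ)) {y : L'}
    (hy : y ∈ G' i) : ∃ x ∈ G i, σ x = y := by
  rw [← h.map i hi] at hy
  simpa [Submodule.mem_map] using hy

theorem char_unique (h : Hyp G G' σ) {m : ℤ} (hm : 1 ≤ m) {y₁ y₂ : L'}
    (h1 : y₁ ∈ G' (m + 1)) (h2 : y₂ ∈ G' (m + 1))
    (he : ∀ z ∈ G (-1), ⁅y₁, σ z⁆ = ⁅y₂, σ z⁆) : y₁ = y₂ := by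
  have hsub : y₁ - y₂ = 0 := by
    refine h.tr' (m + 1) (by omega) _ (sub_mem h1 h2) ?_
    intro y' hy'
    obtain ⟨z, hz, rfl⟩ := h.surjOn (mem3 (by norm_num)) hy'
    rw [sub_lie, he z hz, sub_self]
  exact sub_eq_zero.mp hsub

theorem step (h : Hyp G G' σ) {m : ℤ} (hm : 1 ≤ m) {f : L → L'} (hf : Qp G G' σ m f) :
    ∃ f' : L → L', Qp G G' σ (m + 1) f' ∧
      (∀ u ∈ G (m + 1), ∀ z ∈ G (-1), ⁅f' u, σ z⁆ = f ⁅u, z⁆) ∧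
      (∀ x ∈ G 1, ∀ w ∈ G m, f' ⁅x, w⁆ = ⁅σ x, f w⁆) := by
  classical
  set C : L → L' → Prop := fun u y => y ∈ G' (m + 1) ∧ ∀ z ∈ G (-1), ⁅y, σ z⁆ = f ⁅u, z⁆
    with hC
  have uniq : ∀ u y₁ y₂, C u y₁ → C u y₂ → y₁ = y₂ := by
    rintro u y₁ y₂ ⟨r1, e1⟩ ⟨r2, e2⟩
    exact char_unique h hm r1 r2 (fun z hz => by rw [e1 z hz, e2 z hz])
  have gen : ∀ x ∈ G 1, ∀ w ∈ G m, C ⁅x, w⁆ ⁅σ x, f w⁆ := by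
    intro x hx w hw
    constructor
    · exact memG (by ring)
        (h.gr' 1 m _ (h.mapmem (mem3 (by norm_num)) hx) _ (hf.range w hw))
    · intro z hz
      have hfw := hf.du w hw z hz x hx
      have hxz : (⁅x, z⁆) ∈ G 0 := memG (by ring) (h.gr 1 (-1) x hx z hz)
      have hbrxz : σ ⁅x, z⁆ = ⁅σ x, σ z⁆ :=
        h.br 1 (mem3 (by norm_num)) (-1) (mem3 (by norm_num)) (mem3 (by norm_num)) x hx z hz
      have hm1 : (⁅x, ⁅w, z⁆⁆) ∈ G m :=
        memG (by ring) (h.gr 1 (m + -1) x hx _ (h.gr m (-1) w hw z hz))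
      have hm2 : (⁅⁅x, z⁆, w⁆) ∈ G m := memG (by ring) (h.gr 0 m _ hxz w hw)
      calc ⁅(⁅σ x, f w⁆ : L'), σ z⁆
          = ⁅σ x, ⁅f w, σ z⁆⁆ - ⁅f w, ⁅σ x, σ z⁆⁆ := lie_lie _ _ _
        _ = f ⁅x, ⁅w, z⁆⁆ - ⁅f w, σ ⁅x, z⁆⁆ := by rw [hfw, hbrxz]
        _ = f ⁅x, ⁅w, z⁆⁆ + f ⁅⁅x, z⁆, w⁆ := by
            rw [hf.equiv0 _ hxz w hw]
            rw [sub_eq_add_neg, ← lie_skew (σ ⁅x, z⁆) (f w)]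
        _ = f (⁅x, ⁅w, z⁆⁆ + ⁅⁅x, z⁆, w⁆) := (hf.add _ hm1 _ hm2).symm
        _ = f ⁅⁅x, w⁆, z⁆ := by
            congr 1
            rw [lie_lie x w z, sub_eq_add_neg, lie_skew]
  have exi : ∀ u ∈ G (m + 1), ∃ y, C u y := by
    intro u hu
    rw [h.sp m hm] at hu
    induction hu using Submodule.span_induction with
    | mem w hw =>
      obtain ⟨p, hp, w', hw', rfl⟩ := hw
      exact ⟨_, gen p hp w' hw'⟩
    | zero =>
      refine ⟨0, zero_mem _, fun z hz => ?_⟩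
      rw [zero_lie, zero_lie, hf.zero]
    | add x y hx hy ihx ihy =>
      obtain ⟨y₁, r1, e1⟩ := ihx
      obtain ⟨y₂, r2, e2⟩ := ihy
      have hx' : x ∈ G (m + 1) := by rw [h.sp m hm]; exact hx
      have hy' : y ∈ G (m + 1) := by rw [h.sp m hm]; exact hy
      refine ⟨y₁ + y₂, add_mem r1 r2, fun z hz => ?_⟩
      rw [add_lie, e1 z hz, e2 z hz, add_lie,
        hf.add _ (memG (by ring) (h.gr (m + 1) (-1) x hx' z hz))
          _ (memG (by ring) (h.gr (m + 1) (-1) y hy' z hz))]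
    | smul c x hx ihx =>
      obtain ⟨y₁, r1, e1⟩ := ihx
      have hx' : x ∈ G (m + 1) := by rw [h.sp m hm]; exact hx
      refine ⟨c • y₁, Submodule.smul_mem _ _ r1, fun z hz => ?_⟩
      rw [smul_lie, e1 z hz, smul_lie,
        hf.smul c _ (memG (by ring) (h.gr (m + 1) (-1) x hx' z hz))]
  let f' : L → L' := fun u => if hu : ∃ y, C u y then hu.choose else 0
  have hchar : ∀ u ∈ G (m + 1), C u (f' u) := by
    intro u hu
    have hex := exi u hu
    simp only [f', dif_pos hex]
    exact hex.choose_spec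
  have huniq : ∀ u ∈ G (m + 1), ∀ y, C u y → f' u = y := fun u hu y hy =>
    uniq u _ _ (hchar u hu) hy
  have hup : ∀ x ∈ G 1, ∀ w ∈ G m, f' ⁅x, w⁆ = ⁅σ x, f w⁆ := by
    intro x hx w hw
    exact huniq _ (memG (by ring) (h.gr 1 m x hx w hw)) _ (gen x hx w hw)
  have hdown : ∀ u ∈ G (m + 1), ∀ z ∈ G (-1), ⁅f' u, σ z⁆ = f ⁅u, z⁆ :=
    fun u hu => (hchar u hu).2
  refine ⟨f', ?_, hdown, hup⟩
  constructor
  · exact fun u hu => (hchar u hu).1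
  · intro x hx y hy
    refine (huniq (x + y) (add_mem hx hy) _ ⟨add_mem (hchar x hx).1 (hchar y hy).1,
      fun z hz => ?_⟩)
    rw [add_lie, hdown x hx z hz, hdown y hy z hz, add_lie,
      hf.add _ (memG (by ring) (h.gr (m + 1) (-1) x hx z hz))
        _ (memG (by ring) (h.gr (m + 1) (-1) y hy z hz))]
  · intro c x hx
    refine (huniq (c • x) (Submodule.smul_mem _ _ hx) _
      ⟨Submodule.smul_mem _ _ (hchar x hx).1, fun z hz => ?_⟩)
    rw [smul_lie, hdown x hx z hz, smul_lie,
      hf.smul c _ (memG (by ring) (h.gr (m + 1) (-1) x hx z hz))]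
  · intro a ha u hu
    refine (huniq _ (memG (by ring) (h.gr 0 (m + 1) a ha u hu)) _ ⟨?_, ?_⟩)
    · exact memG (by ring)
        (h.gr' 0 (m + 1) _ (h.mapmem (mem3 (by norm_num)) ha) _ (hchar u hu).1)
    · intro z hz
      have haz : (⁅a, z⁆) ∈ G (-1) := memG (by ring) (h.gr 0 (-1) a ha z hz)
      have huz : (⁅u, z⁆) ∈ G m := memG (by ring) (h.gr (m + 1) (-1) u hu z hz)
      have huaz : (⁅u, ⁅a, z⁆⁆) ∈ G m :=
        memG (by ring) (h.gr (m + 1) (-1) u hu _ haz)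
      have hauz : (⁅a, ⁅u, z⁆⁆) ∈ G m := memG (by ring) (h.gr 0 m a ha _ huz)
      calc ⁅(⁅σ a, f' u⁆ : L'), σ z⁆
          = ⁅σ a, ⁅f' u, σ z⁆⁆ - ⁅f' u, ⁅σ a, σ z⁆⁆ := lie_lie _ _ _
        _ = ⁅σ a, f ⁅u, z⁆⁆ - ⁅f' u, σ ⁅a, z⁆⁆ := by
            rw [hdown u hu z hz,
              h.br 0 (mem3 (by norm_num)) (-1) (mem3 (by norm_num)) (mem3 (by norm_num))
                a ha z hz]
        _ = f ⁅a, ⁅u, z⁆⁆ - f ⁅u, ⁅a, z⁆⁆ := by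
            rw [← hf.equiv0 a ha _ huz, hdown u hu _ haz]
        _ = f (⁅a, ⁅u, z⁆⁆ - ⁅u, ⁅a, z⁆⁆) := (hf.sub hauz huaz).symm
        _ = f ⁅⁅a, u⁆, z⁆ := by rw [lie_lie a u z]
  · intro u hu z hz x hx
    have huz : (⁅u, z⁆) ∈ G m := memG (by ring) (h.gr (m + 1) (-1) u hu z hz)
    rw [hdown u hu z hz, hup x hx _ huz]

theorem base_qp (h : Hyp G G' σ) : Qp G G' σ 1 ⇑σ where
  range := fun _ hx => h.mapmem (mem3 (by norm_num)) hx
  add := fun x _ y _ => map_add σ x y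
  smul := fun c x _ => map_smul σ c x
  equiv0 := fun a ha u hu =>
    h.br 0 (mem3 (by norm_num)) 1 (mem3 (by norm_num)) (mem3 (by norm_num)) a ha u hu
  du := fun u hu z hz x hx => by
    have h2 : (⁅u, z⁆) ∈ G 0 := memG (by ring) (h.gr 1 (-1) u hu z hz)
    have h1 : σ ⁅u, z⁆ = ⁅σ u, σ z⁆ :=
      h.br 1 (mem3 (by norm_num)) (-1) (mem3 (by norm_num)) (mem3 (by norm_num)) u hu z hz
    have h3 : σ ⁅x, ⁅u, z⁆⁆ = ⁅σ x, σ ⁅u, z⁆⁆ :=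
      h.br 1 (mem3 (by norm_num)) 0 (mem3 (by norm_num)) (mem3 (by norm_num)) x hx _ h2
    rw [h3, h1]

theorem exists_upto (h : Hyp G G' σ) (k : ℕ) :
    ∃ F : ℤ → L → L', F 1 = ⇑σ ∧
      (∀ m : ℤ, 1 ≤ m → m ≤ (k : ℤ) + 1 → Qp G G' σ m (F m)) ∧
      (∀ m : ℤ, 1 ≤ m → m ≤ (k : ℤ) →
        (∀ u ∈ G (m + 1), ∀ z ∈ G (-1), ⁅F (m + 1) u, σ z⁆ = F m ⁅u, z⁆) ∧
        (∀ x ∈ G 1, ∀ w ∈ G m, F (m + 1) ⁅x, w⁆ = ⁅σ x, F m w⁆)) := by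
  classical
  induction k with
  | zero =>
    refine ⟨fun _ => ⇑σ, rfl, ?_, ?_⟩
    · intro m hm1 hm2
      have : m = 1 := by omega
      subst this
      exact base_qp h
    · intro m hm1 hm2
      omega
  | succ k ih =>
    obtain ⟨F, hF1, hFQ, hFL⟩ := ih
    obtain ⟨f', hf'Q, hf'D, hf'U⟩ :=
      step h (m := (k : ℤ) + 1) (by omega) (hFQ ((k : ℤ) + 1) (by omega) (by omega))
    refine ⟨Function.update F ((k : ℤ) + 2) f', ?_, ?_, ?_⟩
    · rw [Function.update_of_ne (by omega) _ _]
      exact hF1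
    · intro m hm1 hm2
      rcases (by omega : m ≤ (k : ℤ) + 1 ∨ m = (k : ℤ) + 2) with hc | hc
      · rw [Function.update_of_ne (by omega) _ _]
        exact hFQ m hm1 hc
      · subst hc
        rw [Function.update_self]
        have e : (k : ℤ) + 1 + 1 = (k : ℤ) + 2 := by ring
        rw [← e]
        exact hf'Q
    · intro m hm1 hm2
      rcases (by omega : m ≤ (k : ℤ) ∨ m = (k : ℤ) + 1) with hc | hc
      · rw [Function.update_of_ne (by omega) _ _, Function.update_of_ne (by omega) _ _]
        exact hFL m hm1 hc
      · subst hc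
        have e : (k : ℤ) + 1 + 1 = (k : ℤ) + 2 := by ring
        rw [e, Function.update_self, Function.update_of_ne (by omega) _ _]
        exact ⟨fun u hu z hz => hf'D u (memG e.symm hu) z hz,
          fun x hx w hw => hf'U x hx w hw⟩

theorem agree (h : Hyp G G' σ) {m : ℤ} (hm : 1 ≤ m) {f₁ f₂ g₁ g₂ : L → L'}
    (hff : ∀ w ∈ G m, f₁ w = f₂ w)
    (hr₁ : ∀ u ∈ G (m + 1), g₁ u ∈ G' (m + 1))
    (hr₂ : ∀ u ∈ G (m + 1), g₂ u ∈ G' (m + 1))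
    (hd₁ : ∀ u ∈ G (m + 1), ∀ z ∈ G (-1), ⁅g₁ u, σ z⁆ = f₁ ⁅u, z⁆)
    (hd₂ : ∀ u ∈ G (m + 1), ∀ z ∈ G (-1), ⁅g₂ u, σ z⁆ = f₂ ⁅u, z⁆) :
    ∀ u ∈ G (m + 1), g₁ u = g₂ u := by
  intro u hu
  refine char_unique h hm (hr₁ u hu) (hr₂ u hu) (fun z hz => ?_)
  rw [hd₁ u hu z hz, hd₂ u hu z hz, hff _ (memG (by ring) (h.gr (m + 1) (-1) u hu z hz))]

theorem pos_family (h : Hyp G G' σ) :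
    ∃ T : ℤ → L → L', (∀ x, T 1 x = σ x) ∧
      (∀ m : ℤ, 1 ≤ m → Qp G G' σ m (T m)) ∧
      (∀ m : ℤ, 1 ≤ m →
        (∀ u ∈ G (m + 1), ∀ z ∈ G (-1), ⁅T (m + 1) u, σ z⁆ = T m ⁅u, z⁆) ∧
        (∀ x ∈ G 1, ∀ w ∈ G m, T (m + 1) ⁅x, w⁆ = ⁅σ x, T m w⁆)) ∧
      (∀ m : ℤ, 1 ≤ m → ∀ x ∈ G m, T m x = 0 → x = 0) ∧
      (∀ m : ℤ, 1 ≤ m → ∀ y ∈ G' m, ∃ x ∈ G m, T m x = y) := by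
  classical
  set Fk : ℕ → ℤ → L → L' := fun k => (exists_upto h k).choose with hFkdef
  have hFk : ∀ k : ℕ, (Fk k) 1 = ⇑σ ∧
      (∀ m : ℤ, 1 ≤ m → m ≤ (k : ℤ) + 1 → Qp G G' σ m (Fk k m)) ∧
      (∀ m : ℤ, 1 ≤ m → m ≤ (k : ℤ) →
        (∀ u ∈ G (m + 1), ∀ z ∈ G (-1), ⁅Fk k (m + 1) u, σ z⁆ = Fk k m ⁅u, z⁆) ∧
        (∀ x ∈ G 1, ∀ w ∈ G m, Fk k (m + 1) ⁅x, w⁆ = ⁅σ x, Fk k m w⁆)) :=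
    fun k => (exists_upto h k).choose_spec
  have hagree0 : ∀ j : ℕ, ∀ k₁ k₂ : ℕ, (j : ℤ) + 1 ≤ (k₁ : ℤ) + 1 →
      (j : ℤ) + 1 ≤ (k₂ : ℤ) + 1 →
      ∀ u ∈ G ((j : ℤ) + 1), Fk k₁ ((j : ℤ) + 1) u = Fk k₂ ((j : ℤ) + 1) u := by
    intro j
    induction j with
    | zero =>
      intro k₁ k₂ _ _ u _
      simp only [Nat.cast_zero, zero_add]
      rw [(hFk k₁).1, (hFk k₂).1]
    | succ j ih =>
      intro k₁ k₂ hb₁ hb₂ u hu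
      have hcast : ((j + 1 : ℕ) : ℤ) = (j : ℤ) + 1 := by push_cast; ring
      rw [hcast] at hu ⊢
      refine agree h (by omega) (fun w hw => ih k₁ k₂ (by omega) (by omega) w hw)
        (((hFk k₁).2.1 ((j : ℤ) + 1 + 1) (by omega) (by omega)).range)
        (((hFk k₂).2.1 ((j : ℤ) + 1 + 1) (by omega) (by omega)).range)
        (((hFk k₁).2.2 ((j : ℤ) + 1) (by omega) (by omega)).1)
        (((hFk k₂).2.2 ((j : ℤ) + 1) (by omega) (by omega)).1) u hu
  have hagree : ∀ m : ℤ, 1 ≤ m → ∀ k₁ k₂ : ℕ, m ≤ (k₁ : ℤ) + 1 → m ≤ (k₂ : ℤ) + 1 →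
      ∀ u ∈ G m, Fk k₁ m u = Fk k₂ m u := by
    intro m hm k₁ k₂ h₁ h₂ u hu
    have e : ((m - 1).toNat : ℤ) + 1 = m := by omega
    have := hagree0 (m - 1).toNat k₁ k₂ (by omega) (by omega)
    rw [e] at this
    exact this u hu
  set T : ℤ → L → L' := fun m => Fk m.toNat m with hTdef
  have hT1 : ∀ x, T 1 x = σ x := by
    intro x
    show Fk (1 : ℤ).toNat 1 x = σ x
    rw [(hFk (1 : ℤ).toNat).1]
  have hTQ : ∀ m : ℤ, 1 ≤ m → Qp G G' σ m (T m) :=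
    fun m hm => (hFk m.toNat).2.1 m hm (by omega)
  have hTlink : ∀ m : ℤ, 1 ≤ m →
      (∀ u ∈ G (m + 1), ∀ z ∈ G (-1), ⁅T (m + 1) u, σ z⁆ = T m ⁅u, z⁆) ∧
      (∀ x ∈ G 1, ∀ w ∈ G m, T (m + 1) ⁅x, w⁆ = ⁅σ x, T m w⁆) := by
    intro m hm
    have hk : m ≤ ((m + 1).toNat : ℤ) := by omega
    have hL := (hFk (m + 1).toNat).2.2 m hm hk
    constructor
    · intro u hu z hz
      have h1 : T (m + 1) u = Fk (m + 1).toNat (m + 1) u := rfl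
      rw [h1, (hL.1 u hu z hz),
        hagree m hm (m + 1).toNat m.toNat (by omega) (by omega) _
          (memG (by ring) (h.gr (m + 1) (-1) u hu z hz))]
    · intro x hx w hw
      have h1 : T (m + 1) ⁅x, w⁆ = Fk (m + 1).toNat (m + 1) ⁅x, w⁆ := rfl
      rw [h1, hL.2 x hx w hw,
        hagree m hm (m + 1).toNat m.toNat (by omega) (by omega) w hw]
  have hTinj0 : ∀ j : ℕ, ∀ x ∈ G ((j : ℤ) + 1), T ((j : ℤ) + 1) x = 0 → x = 0 := by
    intro j
    induction j with
    | zero =>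
      intro x hx h0
      simp only [Nat.cast_zero, zero_add] at hx h0
      rw [hT1 x] at h0
      exact h.inj 1 (mem3 (by norm_num)) x hx h0
    | succ j ih =>
      intro x hx h0
      have hcast : ((j + 1 : ℕ) : ℤ) = (j : ℤ) + 1 := by push_cast; ring
      rw [hcast] at hx h0
      refine h.tr ((j : ℤ) + 1 + 1) (by omega) x hx (fun z hz => ?_)
      have hd := (hTlink ((j : ℤ) + 1) (by omega)).1 x hx z hz
      rw [h0, zero_lie] at hd
      exact ih _ (memG (by ring) (h.gr ((j : ℤ) + 1 + 1) (-1) x hx z hz)) hd.symm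
  have hTinj : ∀ m : ℤ, 1 ≤ m → ∀ x ∈ G m, T m x = 0 → x = 0 := by
    intro m hm x hx h0
    have e : ((m - 1).toNat : ℤ) + 1 = m := by omega
    have := hTinj0 (m - 1).toNat x (by rw [e]; exact hx)
    rw [e] at this
    exact this h0
  have hTsurj0 : ∀ j : ℕ, ∀ y ∈ G' ((j : ℤ) + 1), ∃ x ∈ G ((j : ℤ) + 1), T ((j : ℤ) + 1) x = y := by
    intro j
    induction j with
    | zero =>
      intro y hy
      simp only [Nat.cast_zero, zero_add] at hy ⊢
      obtain ⟨x, hx, rfl⟩ := h.surjOn (mem3 (by norm_num)) hy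
      exact ⟨x, hx, hT1 x⟩
    | succ j ih =>
      intro y hy
      have hcast : ((j + 1 : ℕ) : ℤ) = (j : ℤ) + 1 := by push_cast; ring
      rw [hcast] at hy ⊢
      set m : ℤ := (j : ℤ) + 1 with hmdef
      have hm : 1 ≤ m := by omega
      rw [h.sp' m hm] at hy
      induction hy using Submodule.span_induction with
      | mem w hw =>
        obtain ⟨p', hp', w', hw', rfl⟩ := hw
        obtain ⟨p, hp, rfl⟩ := h.surjOn (mem3 (by norm_num)) hp'
        obtain ⟨w, hw, rfl⟩ := ih w' hw'
        exact ⟨⁅p, w⁆, memG (by ring) (h.gr 1 m p hp w hw),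
          (hTlink m hm).2 p hp w hw⟩
      | zero =>
        exact ⟨0, zero_mem _, (hTQ (m + 1) (by omega)).zero⟩
      | add y₁ y₂ hy₁ hy₂ ih₁ ih₂ =>
        obtain ⟨x₁, hx₁, rfl⟩ := ih₁
        obtain ⟨x₂, hx₂, rfl⟩ := ih₂
        exact ⟨x₁ + x₂, add_mem hx₁ hx₂, (hTQ (m + 1) (by omega)).add x₁ hx₁ x₂ hx₂⟩
      | smul c y₁ hy₁ ih₁ =>
        obtain ⟨x₁, hx₁, rfl⟩ := ih₁
        exact ⟨c • x₁, Submodule.smul_mem _ _ hx₁, (hTQ (m + 1) (by omega)).smul c x₁ hx₁⟩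
  have hTsurj : ∀ m : ℤ, 1 ≤ m → ∀ y ∈ G' m, ∃ x ∈ G m, T m x = y := by
    intro m hm y hy
    have e : ((m - 1).toNat : ℤ) + 1 = m := by omega
    have := hTsurj0 (m - 1).toNat y (by rw [e]; exact hy)
    rw [e] at this
    exact this
  exact ⟨T, hT1, hTQ, hTlink, hTinj, hTsurj⟩

theorem main_aux (h : Hyp G G' σ) (hf : Hyp (fun n => G (-n)) (fun n => G' (-n)) σ)
    (hind : iSupIndep G) (htop : (⨆ i, G i) = ⊤)
    (hind' : iSupIndep G') (htop' : (⨆ i, G' i) = ⊤) :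
    ∃ e : L ≃ₗ⁅ℂ⁆ L',
      (∀ i ∈ ({-1, 0, 1} : Set ℤ), ∀ x ∈ G i, e x = σ x) ∧
      (∀ i : ℤ, Submodule.map (e.toLinearEquiv : L →ₗ[ℂ] L') (G i) = G' i) := by
  classical
  obtain ⟨Tp, hTp1, hTpQ, hTpL, hTpI, hTpS⟩ := pos_family h
  obtain ⟨Tn, hTn1, hTnQ, hTnL, hTnI, hTnS⟩ := pos_family hf
  set τ : ℤ → L → L' := fun n => if 1 ≤ n then Tp n else if n = 0 then ⇑σ
    else fun x => Tn (-n) x with hτdef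
  have τpos : ∀ n : ℤ, 1 ≤ n → τ n = Tp n := by
    intro n hn; simp only [hτdef]; rw [if_pos hn]
  have τzeroeq : τ 0 = ⇑σ := by
    simp only [hτdef]; norm_num
  have τneg : ∀ n : ℤ, n ≤ -1 → τ n = fun x => Tn (-n) x := by
    intro n hn; simp only [hτdef]; rw [if_neg (by omega), if_neg (by omega)]
  have τ1 : ∀ w, τ 1 w = σ w := by
    intro w; rw [τpos 1 (by omega)]; exact hTp1 w
  have τ0 : ∀ w, τ 0 w = σ w := by intro w; rw [τzeroeq]
  have τm1 : ∀ w, τ (-1) w = σ w := by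
    intro w
    rw [τneg (-1) (by omega)]
    show Tn (-(-1)) w = σ w
    rw [show (-(-1) : ℤ) = 1 by norm_num]
    exact hTn1 w
  have τloc : ∀ i ∈ ({-1, 0, 1} : Set ℤ), ∀ x ∈ G i, τ i x = σ x := by
    intro i hi x _
    simp only [Set.mem_insert_iff, Set.mem_singleton_iff] at hi
    rcases hi with rfl | rfl | rfl
    · exact τm1 x
    · exact τ0 x
    · exact τ1 x
  have τrange : ∀ n : ℤ, ∀ x ∈ G n, τ n x ∈ G' n := by
    intro n x hx
    rcases (by omega : 1 ≤ n ∨ n = 0 ∨ n ≤ -1) with h1 | h1 | h1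
    · rw [τpos n h1]; exact (hTpQ n h1).range x hx
    · subst h1; rw [τzeroeq]; exact h.mapmem (mem3 (by norm_num)) hx
    · rw [τneg n h1]
      exact memG (show -(-n) = n by ring)
        ((hTnQ (-n) (by omega)).range x (memG (show n = -(-n) by ring) hx))
  have τadd : ∀ n : ℤ, ∀ x ∈ G n, ∀ y ∈ G n, τ n (x + y) = τ n x + τ n y := by
    intro n x hx y hy
    rcases (by omega : 1 ≤ n ∨ n = 0 ∨ n ≤ -1) with h1 | h1 | h1
    · rw [τpos n h1]; exact (hTpQ n h1).add x hx y hy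
    · subst h1; rw [τzeroeq]; exact map_add σ x y
    · rw [τneg n h1]
      exact (hTnQ (-n) (by omega)).add x (memG (show n = -(-n) by ring) hx)
        y (memG (show n = -(-n) by ring) hy)
  have τsmul : ∀ n : ℤ, ∀ (c : ℂ), ∀ x ∈ G n, τ n (c • x) = c • τ n x := by
    intro n c x hx
    rcases (by omega : 1 ≤ n ∨ n = 0 ∨ n ≤ -1) with h1 | h1 | h1
    · rw [τpos n h1]; exact (hTpQ n h1).smul c x hx
    · subst h1; rw [τzeroeq]; exact map_smul σ c x
    · rw [τneg n h1]
      exact (hTnQ (-n) (by omega)).smul c x (memG (show n = -(-n) by ring) hx)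
  have τsub : ∀ n : ℤ, ∀ x ∈ G n, ∀ y ∈ G n, τ n (x - y) = τ n x - τ n y := by
    intro n x hx y hy
    have h1 : x - y = x + (-1 : ℂ) • y := by rw [neg_one_smul, ← sub_eq_add_neg]
    rw [h1, τadd n x hx _ (Submodule.smul_mem _ _ hy), τsmul n (-1) y hy, neg_one_smul,
      ← sub_eq_add_neg]
  have τzero0 : ∀ n : ℤ, τ n 0 = 0 := by
    intro n
    have := τsmul n 0 0 (zero_mem _)
    simpa using this
  have τneg1 : ∀ n : ℤ, ∀ w ∈ G n, τ n (-w) = -τ n w := by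
    intro n w hw
    have := τsmul n (-1) w hw
    rwa [neg_one_smul, neg_one_smul] at this
  have τinj : ∀ n : ℤ, ∀ x ∈ G n, τ n x = 0 → x = 0 := by
    intro n x hx h0
    rcases (by omega : 1 ≤ n ∨ n = 0 ∨ n ≤ -1) with h1 | h1 | h1
    · rw [τpos n h1] at h0; exact hTpI n h1 x hx h0
    · subst h1; rw [τzeroeq] at h0; exact h.inj 0 (mem3 (by norm_num)) x hx h0
    · rw [τneg n h1] at h0
      exact hTnI (-n) (by omega) x (memG (show n = -(-n) by ring) hx) h0
  have τsurj : ∀ n : ℤ, ∀ y ∈ G' n, ∃ x ∈ G n, τ n x = y := by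
    intro n y hy
    rcases (by omega : 1 ≤ n ∨ n = 0 ∨ n ≤ -1) with h1 | h1 | h1
    · obtain ⟨x, hx, hxy⟩ := hTpS n h1 y hy
      exact ⟨x, hx, by rw [τpos n h1]; exact hxy⟩
    · subst h1
      obtain ⟨x, hx, hxy⟩ := h.surjOn (mem3 (by norm_num)) hy
      exact ⟨x, hx, (τ0 x).trans hxy⟩
    · obtain ⟨x, hx, hxy⟩ := hTnS (-n) (by omega) y (memG (show n = -(-n) by ring) hy)
      exact ⟨x, memG (show -(-n) = n by ring) hx, by rw [τneg n h1]; exact hxy⟩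
  -- base bracket compatibilities
  have br0 : ∀ n : ℤ, ∀ a ∈ G 0, ∀ u ∈ G n, τ n ⁅a, u⁆ = ⁅σ a, τ n u⁆ := by
    intro n a ha u hu
    rcases (by omega : 1 ≤ n ∨ n = 0 ∨ n ≤ -1) with h1 | h1 | h1
    · rw [τpos n h1]; exact (hTpQ n h1).equiv0 a ha u hu
    · subst h1
      rw [τzeroeq]
      exact h.br 0 (mem3 (by norm_num)) 0 (mem3 (by norm_num)) (mem3 (by norm_num)) a ha u hu
    · rw [τneg n h1]
      exact (hTnQ (-n) (by omega)).equiv0 a (memG (show (0 : ℤ) = -0 by ring) ha)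
        u (memG (show n = -(-n) by ring) hu)
  have brP_up : ∀ p : ℤ, 1 ≤ p → ∀ x ∈ G 1, ∀ w ∈ G p,
      τ (p + 1) ⁅x, w⁆ = ⁅σ x, τ p w⁆ := by
    intro p hp x hx w hw
    rw [τpos (p + 1) (by omega), τpos p hp]
    exact (hTpL p hp).2 x hx w hw
  have brP_down : ∀ p : ℤ, 2 ≤ p → ∀ u ∈ G p, ∀ z ∈ G (-1),
      τ (p - 1) ⁅u, z⁆ = ⁅τ p u, σ z⁆ := by
    intro p hp u hu z hz
    have h2 := (hTpL (p - 1) (by omega)).1 u (memG (by ring) hu) z hz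
    rw [show (p - 1 + 1 : ℤ) = p by ring] at h2
    rw [τpos (p - 1) (by omega), τpos p (by omega)]
    exact h2.symm
  have brN_up : ∀ p : ℤ, p ≤ -1 → ∀ x ∈ G (-1), ∀ w ∈ G p,
      τ (p - 1) ⁅x, w⁆ = ⁅σ x, τ p w⁆ := by
    intro p hp x hx w hw
    have h2 := (hTnL (-p) (by omega)).2 x (memG (show (-1 : ℤ) = -1 by norm_num) hx)
      w (memG (show p = -(-p) by ring) hw)
    rw [τneg (p - 1) (by omega), τneg p hp]
    show Tn (-(p - 1)) ⁅x, w⁆ = ⁅σ x, Tn (-p) w⁆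
    rw [show (-(p - 1) : ℤ) = -p + 1 by ring]
    exact h2
  have brN_down : ∀ p : ℤ, p ≤ -2 → ∀ u ∈ G p, ∀ z ∈ G 1,
      τ (p + 1) ⁅u, z⁆ = ⁅τ p u, σ z⁆ := by
    intro p hp u hu z hz
    have h2 := (hTnL (-p - 1) (by omega)).1 u (memG (show p = -(-p - 1 + 1) by ring) hu)
      z (memG (show (1 : ℤ) = -(-1) by norm_num) hz)
    rw [show (-p - 1 + 1 : ℤ) = -p by ring] at h2
    rw [τneg (p + 1) (by omega), τneg p (by omega)]
    show Tn (-(p + 1)) ⁅u, z⁆ = ⁅Tn (-p) u, σ z⁆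
    rw [show (-(p + 1) : ℤ) = -p - 1 by ring]
    exact h2.symm
  have br1 : ∀ n : ℤ, ∀ x ∈ G 1, ∀ y ∈ G n, τ (1 + n) ⁅x, y⁆ = ⁅σ x, τ n y⁆ := by
    intro n x hx y hy
    rcases (by omega : 1 ≤ n ∨ n = 0 ∨ n = -1 ∨ n ≤ -2) with h1 | h1 | h1 | h1
    · rw [show (1 + n : ℤ) = n + 1 by ring]; exact brP_up n h1 x hx y hy
    · subst h1
      rw [show ((1 : ℤ) + 0) = 1 by norm_num, τ1, τ0]
      exact h.br 1 (mem3 (by norm_num)) 0 (mem3 (by norm_num)) (mem3 (by norm_num)) x hx y hy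
    · subst h1
      rw [show ((1 : ℤ) + -1) = 0 by norm_num, τ0, τm1]
      exact h.br 1 (mem3 (by norm_num)) (-1) (mem3 (by norm_num)) (mem3 (by norm_num)) x hx y hy
    · have hyx : (⁅y, x⁆) ∈ G (n + 1) := memG (by ring) (h.gr n 1 y hy x hx)
      have h2 := brN_down n h1 y hy x hx
      have h3 : (⁅x, y⁆ : L) = -⁅y, x⁆ := by rw [← lie_skew x y]
      calc τ (1 + n) ⁅x, y⁆ = τ (1 + n) (-⁅y, x⁆) := by rw [h3]
        _ = -τ (n + 1) ⁅y, x⁆ := by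
            rw [show (1 + n : ℤ) = n + 1 by ring]; exact τneg1 (n + 1) _ hyx
        _ = -⁅τ n y, σ x⁆ := by rw [h2]
        _ = ⁅σ x, τ n y⁆ := lie_skew _ _
  have brm1 : ∀ n : ℤ, ∀ x ∈ G (-1), ∀ y ∈ G n, τ (-1 + n) ⁅x, y⁆ = ⁅σ x, τ n y⁆ := by
    intro n x hx y hy
    rcases (by omega : n ≤ -1 ∨ n = 0 ∨ n = 1 ∨ 2 ≤ n) with h1 | h1 | h1 | h1
    · rw [show (-1 + n : ℤ) = n - 1 by ring]; exact brN_up n h1 x hx y hy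
    · subst h1
      rw [show ((-1 : ℤ) + 0) = -1 by norm_num, τm1, τ0]
      exact h.br (-1) (mem3 (by norm_num)) 0 (mem3 (by norm_num)) (mem3 (by norm_num)) x hx y hy
    · subst h1
      rw [show ((-1 : ℤ) + 1) = 0 by norm_num, τ0, τ1]
      exact h.br (-1) (mem3 (by norm_num)) 1 (mem3 (by norm_num)) (mem3 (by norm_num)) x hx y hy
    · have hyx : (⁅y, x⁆) ∈ G (n - 1) := memG (by ring) (h.gr n (-1) y hy x hx)
      have h2 := brP_down n h1 y hy x hx
      have h3 : (⁅x, y⁆ : L) = -⁅y, x⁆ := by rw [← lie_skew x y]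
      calc τ (-1 + n) ⁅x, y⁆ = τ (-1 + n) (-⁅y, x⁆) := by rw [h3]
        _ = -τ (n - 1) ⁅y, x⁆ := by
            rw [show (-1 + n : ℤ) = n - 1 by ring]; exact τneg1 (n - 1) _ hyx
        _ = -⁅τ n y, σ x⁆ := by rw [h2]
        _ = ⁅σ x, τ n y⁆ := lie_skew _ _
  -- positive induction
  have brPos : ∀ j : ℕ, ∀ x ∈ G ((j : ℤ) + 1), ∀ n : ℤ, ∀ y ∈ G n,
      τ ((j : ℤ) + 1 + n) ⁅x, y⁆ = ⁅τ ((j : ℤ) + 1) x, τ n y⁆ := by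
    intro j
    induction j with
    | zero =>
      intro x hx n y hy
      simp only [Nat.cast_zero, zero_add]
      rw [τ1 x]
      exact br1 n x hx y hy
    | succ j ih =>
      intro x hx n y hy
      have hcast : ((j + 1 : ℕ) : ℤ) = (j : ℤ) + 1 := by push_cast; ring
      rw [hcast] at hx ⊢
      have hm : (1 : ℤ) ≤ (j : ℤ) + 1 := by omega
      have hx' : x ∈ Submodule.span ℂ
          {z : L | ∃ p ∈ G 1, ∃ w ∈ G ((j : ℤ) + 1), z = ⁅p, w⁆} := by
        rw [← h.sp ((j : ℤ) + 1) hm]; exact hx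
      clear hx
      induction hx' using Submodule.span_induction with
      | mem w hwgen =>
        obtain ⟨p, hp, w', hw', rfl⟩ := hwgen
        have hwy : (⁅w', y⁆) ∈ G ((j : ℤ) + 1 + n) := h.gr _ n w' hw' y hy
        have hpy : (⁅p, y⁆) ∈ G (1 + n) := h.gr 1 n p hp y hy
        have hA : (⁅p, ⁅w', y⁆⁆) ∈ G ((j : ℤ) + 1 + 1 + n) :=
          memG (by ring) (h.gr 1 ((j : ℤ) + 1 + n) p hp _ hwy)
        have hB : (⁅w', ⁅p, y⁆⁆) ∈ G ((j : ℤ) + 1 + 1 + n) :=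
          memG (by ring) (h.gr ((j : ℤ) + 1) (1 + n) w' hw' _ hpy)
        have t1 : τ ((j : ℤ) + 1 + 1 + n) ⁅p, ⁅w', y⁆⁆ = ⁅σ p, τ ((j : ℤ) + 1 + n) ⁅w', y⁆⁆ := by
          have := br1 ((j : ℤ) + 1 + n) p hp _ hwy
          rwa [show (1 + ((j : ℤ) + 1 + n)) = (j : ℤ) + 1 + 1 + n by ring] at this
        have t2 : τ ((j : ℤ) + 1 + 1 + n) ⁅w', ⁅p, y⁆⁆
            = ⁅τ ((j : ℤ) + 1) w', τ (1 + n) ⁅p, y⁆⁆ := by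
          have := ih w' hw' (1 + n) _ hpy
          rwa [show ((j : ℤ) + 1 + (1 + n)) = (j : ℤ) + 1 + 1 + n by ring] at this
        calc τ ((j : ℤ) + 1 + 1 + n) ⁅⁅p, w'⁆, y⁆
            = τ ((j : ℤ) + 1 + 1 + n) (⁅p, ⁅w', y⁆⁆ - ⁅w', ⁅p, y⁆⁆) := by rw [lie_lie p w' y]
          _ = τ ((j : ℤ) + 1 + 1 + n) ⁅p, ⁅w', y⁆⁆
              - τ ((j : ℤ) + 1 + 1 + n) ⁅w', ⁅p, y⁆⁆ := τsub _ _ hA _ hB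
          _ = ⁅σ p, ⁅τ ((j : ℤ) + 1) w', τ n y⁆⁆
              - ⁅τ ((j : ℤ) + 1) w', ⁅σ p, τ n y⁆⁆ := by
              rw [t1, t2, ih w' hw' n y hy, br1 n p hp y hy]
          _ = ⁅⁅σ p, τ ((j : ℤ) + 1) w'⁆, τ n y⁆ := (lie_lie _ _ _).symm
          _ = ⁅τ ((j : ℤ) + 1 + 1) ⁅p, w'⁆, τ n y⁆ := by
              rw [brP_up ((j : ℤ) + 1) hm p hp w' hw']
      | zero => rw [zero_lie, τzero0, τzero0, zero_lie]
      | add x₁ x₂ hx₁ hx₂ ih₁ ih₂ =>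
        have hx₁' : x₁ ∈ G ((j : ℤ) + 1 + 1) := by rw [h.sp ((j : ℤ) + 1) hm]; exact hx₁
        have hx₂' : x₂ ∈ G ((j : ℤ) + 1 + 1) := by rw [h.sp ((j : ℤ) + 1) hm]; exact hx₂
        rw [add_lie, τadd _ _ (h.gr _ n x₁ hx₁' y hy) _ (h.gr _ n x₂ hx₂' y hy), ih₁, ih₂,
          τadd _ x₁ hx₁' x₂ hx₂', add_lie]
      | smul c x₁ hx₁ ih₁ =>
        have hx₁' : x₁ ∈ G ((j : ℤ) + 1 + 1) := by rw [h.sp ((j : ℤ) + 1) hm]; exact hx₁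
        rw [smul_lie, τsmul _ c _ (h.gr _ n x₁ hx₁' y hy), ih₁, τsmul _ c x₁ hx₁', smul_lie]
  -- negative induction
  have brNeg : ∀ j : ℕ, ∀ x ∈ G (-(j : ℤ) - 1), ∀ n : ℤ, ∀ y ∈ G n,
      τ (-(j : ℤ) - 1 + n) ⁅x, y⁆ = ⁅τ (-(j : ℤ) - 1) x, τ n y⁆ := by
    intro j
    induction j with
    | zero =>
      intro x hx n y hy
      simp only [Nat.cast_zero, neg_zero, zero_sub]
      rw [τm1 x]
      exact brm1 n x hx y hy
    | succ j ih =>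
      intro x hx n y hy
      have hcast : (-((j + 1 : ℕ) : ℤ) - 1) = (-(j : ℤ) - 1) - 1 := by push_cast; ring
      rw [hcast] at hx ⊢
      have hm : (-(j : ℤ) - 1 : ℤ) ≤ -1 := by omega
      have hsp2 : G (-(j : ℤ) - 1 - 1) = Submodule.span ℂ
          {z : L | ∃ p ∈ G (-1), ∃ w ∈ G (-((j : ℤ) + 1)), z = ⁅p, w⁆} := by
        have h2 := hf.sp ((j : ℤ) + 1) (by omega)
        rw [show (-(j : ℤ) - 1 - 1 : ℤ) = -((j : ℤ) + 1 + 1) by ring]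
        exact h2
      have hx' : x ∈ Submodule.span ℂ
          {z : L | ∃ p ∈ G (-1), ∃ w ∈ G (-((j : ℤ) + 1)), z = ⁅p, w⁆} := by
        rw [← hsp2]; exact hx
      clear hx
      induction hx' using Submodule.span_induction with
      | mem w hwgen =>
        obtain ⟨p, hp, w', hw', rfl⟩ := hwgen
        have hw'' : w' ∈ G (-(j : ℤ) - 1) := memG (by ring) hw'
        have hwy : (⁅w', y⁆) ∈ G (-(j : ℤ) - 1 + n) := h.gr _ n w' hw'' y hy
        have hpy : (⁅p, y⁆) ∈ G (-1 + n) := h.gr (-1) n p hp y hy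
        have hA : (⁅p, ⁅w', y⁆⁆) ∈ G (-(j : ℤ) - 1 - 1 + n) :=
          memG (by ring) (h.gr (-1) (-(j : ℤ) - 1 + n) p hp _ hwy)
        have hB : (⁅w', ⁅p, y⁆⁆) ∈ G (-(j : ℤ) - 1 - 1 + n) :=
          memG (by ring) (h.gr (-(j : ℤ) - 1) (-1 + n) w' hw'' _ hpy)
        have t1 : τ (-(j : ℤ) - 1 - 1 + n) ⁅p, ⁅w', y⁆⁆
            = ⁅σ p, τ (-(j : ℤ) - 1 + n) ⁅w', y⁆⁆ := by
          have := brm1 (-(j : ℤ) - 1 + n) p hp _ hwy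
          rwa [show (-1 + (-(j : ℤ) - 1 + n)) = -(j : ℤ) - 1 - 1 + n by ring] at this
        have t2 : τ (-(j : ℤ) - 1 - 1 + n) ⁅w', ⁅p, y⁆⁆
            = ⁅τ (-(j : ℤ) - 1) w', τ (-1 + n) ⁅p, y⁆⁆ := by
          have := ih w' hw'' (-1 + n) _ hpy
          rwa [show (-(j : ℤ) - 1 + (-1 + n)) = -(j : ℤ) - 1 - 1 + n by ring] at this
        calc τ (-(j : ℤ) - 1 - 1 + n) ⁅⁅p, w'⁆, y⁆
            = τ (-(j : ℤ) - 1 - 1 + n) (⁅p, ⁅w', y⁆⁆ - ⁅w', ⁅p, y⁆⁆) := by rw [lie_lie p w' y]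
          _ = τ (-(j : ℤ) - 1 - 1 + n) ⁅p, ⁅w', y⁆⁆
              - τ (-(j : ℤ) - 1 - 1 + n) ⁅w', ⁅p, y⁆⁆ := τsub _ _ hA _ hB
          _ = ⁅σ p, ⁅τ (-(j : ℤ) - 1) w', τ n y⁆⁆
              - ⁅τ (-(j : ℤ) - 1) w', ⁅σ p, τ n y⁆⁆ := by
              rw [t1, t2, ih w' hw'' n y hy, brm1 n p hp y hy]
          _ = ⁅⁅σ p, τ (-(j : ℤ) - 1) w'⁆, τ n y⁆ := (lie_lie _ _ _).symm
          _ = ⁅τ (-(j : ℤ) - 1 - 1) ⁅p, w'⁆, τ n y⁆ := by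
              rw [brN_up (-(j : ℤ) - 1) hm p hp w' hw'']
      | zero => rw [zero_lie, τzero0, τzero0, zero_lie]
      | add x₁ x₂ hx₁ hx₂ ih₁ ih₂ =>
        have hx₁' : x₁ ∈ G (-(j : ℤ) - 1 - 1) := by rw [hsp2]; exact hx₁
        have hx₂' : x₂ ∈ G (-(j : ℤ) - 1 - 1) := by rw [hsp2]; exact hx₂
        rw [add_lie, τadd _ _ (h.gr _ n x₁ hx₁' y hy) _ (h.gr _ n x₂ hx₂' y hy), ih₁, ih₂,
          τadd _ x₁ hx₁' x₂ hx₂', add_lie]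
      | smul c x₁ hx₁ ih₁ =>
        have hx₁' : x₁ ∈ G (-(j : ℤ) - 1 - 1) := by rw [hsp2]; exact hx₁
        rw [smul_lie, τsmul _ c _ (h.gr _ n x₁ hx₁' y hy), ih₁, τsmul _ c x₁ hx₁', smul_lie]
  have τbr : ∀ m n : ℤ, ∀ x ∈ G m, ∀ y ∈ G n, τ (m + n) ⁅x, y⁆ = ⁅τ m x, τ n y⁆ := by
    intro m n x hx y hy
    rcases (by omega : 1 ≤ m ∨ m = 0 ∨ m ≤ -1) with h1 | h1 | h1
    · have e : ((m - 1).toNat : ℤ) + 1 = m := by omega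
      have := brPos (m - 1).toNat x (by rw [e]; exact hx) n y hy
      rwa [e] at this
    · subst h1
      rw [zero_add, τ0 x]
      exact br0 n x hx y hy
    · have e : (-(((-m - 1).toNat : ℤ)) - 1) = m := by omega
      have := brNeg (-m - 1).toNat x (by rw [e]; exact hx) n y hy
      rwa [e] at this
  -- assembly
  have hint : DirectSum.IsInternal G :=
    DirectSum.isInternal_submodule_of_iSupIndep_of_iSup_eq_top hind htop
  have hint' : DirectSum.IsInternal G' :=
    DirectSum.isInternal_submodule_of_iSupIndep_of_iSup_eq_top hind' htop'
  set φ : ∀ n : ℤ, ↥(G n) →ₗ[ℂ] ↥(G' n) := fun n =>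
    { toFun := fun u => ⟨τ n u.1, τrange n u.1 u.2⟩
      map_add' := fun u v => Subtype.ext (τadd n u.1 u.2 v.1 v.2)
      map_smul' := fun c u => Subtype.ext (τsmul n c u.1 u.2) } with hφdef
  have φbij : ∀ n : ℤ, Function.Bijective (φ n) := by
    intro n
    constructor
    · intro u v huv
      have h3 : τ n (↑u : L) = τ n ↑v := congrArg Subtype.val huv
      have h1 : τ n ((↑u : L) - ↑v) = 0 := by
        rw [τsub n _ u.2 _ v.2, h3, sub_self]
      have h2 : (↑u : L) - ↑v = 0 := τinj n _ (sub_mem u.2 v.2) h1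
      exact Subtype.ext (sub_eq_zero.mp h2)
    · intro y
      obtain ⟨x, hx, hxy⟩ := τsurj n ↑y y.2
      exact ⟨⟨x, hx⟩, Subtype.ext hxy⟩
  set eqv : ∀ n : ℤ, ↥(G n) ≃ₗ[ℂ] ↥(G' n) := fun n =>
    LinearEquiv.ofBijective (φ n) (φbij n) with heqvdef
  set E : L →ₗ[ℂ] L' := (DirectSum.toModule ℂ ℤ L' (fun n => (G' n).subtype.comp (φ n))).comp
    (LinearEquiv.ofBijective (DirectSum.coeLinearMap G) hint).symm.toLinearMap with hEdef
  set E' : L' →ₗ[ℂ] L :=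
    (DirectSum.toModule ℂ ℤ L (fun n => (G n).subtype.comp (eqv n).symm.toLinearMap)).comp
    (LinearEquiv.ofBijective (DirectSum.coeLinearMap G') hint').symm.toLinearMap with hE'def
  have hsymmG : ∀ (n : ℤ) (x : L) (hx : x ∈ G n),
      (LinearEquiv.ofBijective (DirectSum.coeLinearMap G) hint).symm x
        = DirectSum.lof ℂ ℤ (fun k => ↥(G k)) n ⟨x, hx⟩ := by
    intro n x hx
    rw [LinearEquiv.symm_apply_eq]
    show x = DirectSum.coeLinearMap G (DirectSum.lof ℂ ℤ (fun k => ↥(G k)) n ⟨x, hx⟩)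
    rw [DirectSum.lof_eq_of, DirectSum.coeLinearMap_of]
  have hsymmG' : ∀ (n : ℤ) (y : L') (hy : y ∈ G' n),
      (LinearEquiv.ofBijective (DirectSum.coeLinearMap G') hint').symm y
        = DirectSum.lof ℂ ℤ (fun k => ↥(G' k)) n ⟨y, hy⟩ := by
    intro n y hy
    rw [LinearEquiv.symm_apply_eq]
    show y = DirectSum.coeLinearMap G' (DirectSum.lof ℂ ℤ (fun k => ↥(G' k)) n ⟨y, hy⟩)
    rw [DirectSum.lof_eq_of, DirectSum.coeLinearMap_of]
  have hE : ∀ (n : ℤ), ∀ x ∈ G n, E x = τ n x := by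
    intro n x hx
    rw [hEdef, LinearMap.comp_apply, LinearEquiv.coe_coe, hsymmG n x hx,
      DirectSum.toModule_lof]
    rfl
  have hE' : ∀ (n : ℤ), ∀ y ∈ G' n, ∀ (hy : y ∈ G' n),
      E' y = ↑((eqv n).symm ⟨y, hy⟩) := by
    intro n y _ hy
    rw [hE'def, LinearMap.comp_apply, LinearEquiv.coe_coe, hsymmG' n y hy,
      DirectSum.toModule_lof]
    rfl
  have hleft : ∀ x : L, E' (E x) = x := by
    intro x
    have hx : x ∈ ⨆ i, G i := by rw [htop]; exact Submodule.mem_top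
    refine Submodule.iSup_induction (motive := fun x => E' (E x) = x) G hx ?_ (by simp) ?_
    · intro n z hz
      rw [hE n z hz, hE' n _ (τrange n z hz) (τrange n z hz)]
      have h1 : eqv n ⟨z, hz⟩ = ⟨τ n z, τrange n z hz⟩ := by
        apply Subtype.ext
        rw [heqvdef]
        simp only [LinearEquiv.ofBijective_apply]
        rfl
      rw [← h1, LinearEquiv.symm_apply_apply]
    · intro a b ha hb
      rw [map_add, map_add, ha, hb]
  have hright : ∀ y : L', E (E' y) = y := by
    intro y
    have hy : y ∈ ⨆ i, G' i := by rw [htop']; exact Submodule.mem_top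
    refine Submodule.iSup_induction (motive := fun y => E (E' y) = y) G' hy ?_ (by simp) ?_
    · intro n z hz
      rw [hE' n z hz hz]
      have hmem := ((eqv n).symm ⟨z, hz⟩).2
      rw [hE n _ hmem]
      have h2 : τ n ↑((eqv n).symm ⟨z, hz⟩) = ↑(eqv n ((eqv n).symm ⟨z, hz⟩)) := by
        rw [heqvdef]
        simp only [LinearEquiv.ofBijective_apply]
        rfl
      rw [h2, LinearEquiv.apply_symm_apply]
    · intro a b ha hb
      rw [map_add, map_add, ha, hb]
  have hlie : ∀ x y : L, E ⁅x, y⁆ = ⁅E x, E y⁆ := by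
    have homog : ∀ (m : ℤ), ∀ x ∈ G m, ∀ y : L, E ⁅x, y⁆ = ⁅E x, E y⁆ := by
      intro m x hx y
      have hy : y ∈ ⨆ i, G i := by rw [htop]; exact Submodule.mem_top
      refine Submodule.iSup_induction (motive := fun y => E ⁅x, y⁆ = ⁅E x, E y⁆) G hy ?_
        (by simp) ?_
      · intro n z hz
        rw [hE (m + n) _ (h.gr m n x hx z hz), hE m x hx, hE n z hz]
        exact τbr m n x hx z hz
      · intro a b ha hb
        rw [lie_add, map_add, map_add, lie_add, ha, hb]
    intro x y
    have hx : x ∈ ⨆ i, G i := by rw [htop]; exact Submodule.mem_top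
    refine Submodule.iSup_induction (motive := fun x => E ⁅x, y⁆ = ⁅E x, E y⁆) G hx ?_
      (by simp) ?_
    · intro n z hz
      exact homog n z hz y
    · intro a b ha hb
      rw [add_lie, map_add, map_add, add_lie, ha, hb]
  refine ⟨⟨⟨E, fun {x y} => hlie x y⟩, E', hleft, hright⟩, ?_, ?_⟩
  · intro i hi x hx
    show E x = σ x
    rw [hE i x hx]
    exact τloc i hi x hx
  · intro i
    apply le_antisymm
    · rintro y ⟨x, hx, rfl⟩
      show E x ∈ G' i
      rw [hE i x hx]
      exact τrange i x hx
    · intro y hy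
      obtain ⟨x, hx, hxy⟩ := τsurj i y hy
      refine Submodule.mem_map.mpr ⟨x, hx, ?_⟩
      show E x = y
      rw [hE i x hx]
      exact hxy

end Stmt2Aux

/-- A graded Lie algebra `L = ⊕ G i` together with a bilinear form `B` on its local part
(encoded as a bilinear form on `L`, only its restriction to the local part matters),
satisfying conditions (i)–(v) of the paper. -/
def GoodGrading (L : Type) [LieRing L] [LieAlgebra ℂ L] (G : ℤ → Submodule ℂ L)
    (B : LinearMap.BilinForm ℂ L) : Prop :=
  -- internal direct sum decomposition
  iSupIndep G ∧ (⨆ i, G i) = ⊤ ∧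
  -- gradation
  (∀ i j : ℤ, ∀ x ∈ G i, ∀ y ∈ G j, ⁅x, y⁆ ∈ G (i + j)) ∧
  -- generated by the local part
  (LieSubalgebra.lieSpan ℂ L ((G (-1) : Set L) ∪ (G 0 : Set L) ∪ (G 1 : Set L)) = ⊤) ∧
  -- (i)
  (∀ i : ℤ, 1 ≤ i →
    G (i + 1) = Submodule.span ℂ {z : L | ∃ x ∈ G 1, ∃ y ∈ G i, z = ⁅x, y⁆} ∧
    G (-(i + 1)) = Submodule.span ℂ {z : L | ∃ x ∈ G (-1), ∃ y ∈ G (-i), z = ⁅x, y⁆}) ∧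
  -- (ii) : nondegeneracy and 𝔏₀-invariance on G i × G (-i), i = 0, 1
  (∀ i : ℤ, (i = 0 ∨ i = 1) →
    (∀ x ∈ G i, (∀ y ∈ G (-i), B x y = 0) → x = 0) ∧
    (∀ y ∈ G (-i), (∀ x ∈ G i, B x y = 0) → y = 0) ∧
    (∀ a ∈ G 0, ∀ x ∈ G i, ∀ y ∈ G (-i), B ⁅a, x⁆ y + B x ⁅a, y⁆ = 0)) ∧
  -- (iii)
  (∀ a ∈ G 0, ∀ x ∈ G 1, ∀ y ∈ G (-1), B a ⁅x, y⁆ = B ⁅a, x⁆ y) ∧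
  -- (iv)
  (∀ i : ℤ, 2 ≤ i → ∀ x ∈ G i, (∀ y ∈ G (-1), ⁅x, y⁆ = 0) → x = 0) ∧
  -- (v)
  (∀ i : ℤ, i ≤ -2 → ∀ x ∈ G i, (∀ y ∈ G 1, ⁅x, y⁆ = 0) → x = 0)

/-- Any isomorphism of local parts of two graded Lie algebras satisfying
conditions (i)–(v) extends to an isomorphism of graded Lie algebras. -/
theorem stmt_2
    (L : Type) [LieRing L] [LieAlgebra ℂ L]
    (L' : Type) [LieRing L'] [LieAlgebra ℂ L']
    (G : ℤ → Submodule ℂ L) (G' : ℤ → Submodule ℂ L')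
    (B : LinearMap.BilinForm ℂ L) (B' : LinearMap.BilinForm ℂ L')
    (hG : GoodGrading L G B) (hG' : GoodGrading L' G' B')
    -- an isomorphism of the local parts, given as (the restriction of) a linear map
    (σ : L →ₗ[ℂ] L')
    (hσmap : ∀ i ∈ ({-1, 0, 1} : Set ℤ), Submodule.map σ (G i) = G' i)
    (hσinj : ∀ x ∈ G (-1) ⊔ G 0 ⊔ G 1, σ x = 0 → x = 0)
    (hσbrack : ∀ i ∈ ({-1, 0, 1} : Set ℤ), ∀ j ∈ ({-1, 0, 1} : Set ℤ),
      i + j ∈ ({-1, 0, 1} : Set ℤ) →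
      ∀ x ∈ G i, ∀ y ∈ G j, σ ⁅x, y⁆ = ⁅σ x, σ y⁆) :
    ∃ e : L ≃ₗ⁅ℂ⁆ L',
      (∀ i ∈ ({-1, 0, 1} : Set ℤ), ∀ x ∈ G i, e x = σ x) ∧
      (∀ i : ℤ, Submodule.map (e.toLinearEquiv : L →ₗ[ℂ] L') (G i) = G' i) := by
  obtain ⟨hind, htop, hgr, -, hsp, -, -, hiv, hv⟩ := hG
  obtain ⟨hind', htop', hgr', -, hsp', -, -, hiv', hv'⟩ := hG'
  have hinjdeg : ∀ i ∈ ({-1, 0, 1} : Set ℤ), ∀ x ∈ G i, σ x = 0 → x = 0 := by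
    intro i hi x hx h0
    refine hσinj x ?_ h0
    simp only [Set.mem_insert_iff, Set.mem_singleton_iff] at hi
    rcases hi with rfl | rfl | rfl
    · exact Submodule.mem_sup_left (Submodule.mem_sup_left hx)
    · exact Submodule.mem_sup_left (Submodule.mem_sup_right hx)
    · exact Submodule.mem_sup_right hx
  have hneg3 : ∀ i : ℤ, i ∈ ({-1, 0, 1} : Set ℤ) → -i ∈ ({-1, 0, 1} : Set ℤ) := by
    intro i hi
    simp only [Set.mem_insert_iff, Set.mem_singleton_iff] at hi
    rcases hi with rfl | rfl | rfl <;> exact Stmt2Aux.mem3 (by norm_num)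
  have h : Stmt2Aux.Hyp G G' σ :=
    { gr := hgr
      gr' := hgr'
      sp := fun i hi => (hsp i hi).1
      sp' := fun i hi => (hsp' i hi).1
      tr := hiv
      tr' := hiv'
      map := hσmap
      inj := hinjdeg
      br := hσbrack }
  have hf : Stmt2Aux.Hyp (fun n => G (-n)) (fun n => G' (-n)) σ :=
    { gr := fun i j x hx y hy =>
        Stmt2Aux.memG (show (-i) + (-j) = -(i + j) by ring) (hgr (-i) (-j) x hx y hy)
      gr' := fun i j x hx y hy =>
        Stmt2Aux.memG (show (-i) + (-j) = -(i + j) by ring) (hgr' (-i) (-j) x hx y hy)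
      sp := fun i hi => (hsp i hi).2
      sp' := fun i hi => (hsp' i hi).2
      tr := fun i hi x hx h0 => hv (-i) (by omega) x hx
        (fun y hy => h0 y (Stmt2Aux.memG (show (1 : ℤ) = -(-1) by norm_num) hy))
      tr' := fun i hi x hx h0 => hv' (-i) (by omega) x hx
        (fun y hy => h0 y (Stmt2Aux.memG (show (1 : ℤ) = -(-1) by norm_num) hy))
      map := fun i hi => hσmap (-i) (hneg3 i hi)
      inj := fun i hi x hx h0 => hinjdeg (-i) (hneg3 i hi) x hx h0
      br := by
        intro i hi j hj hij x hx y hy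
        have hij' : (-i) + (-j) ∈ ({-1, 0, 1} : Set ℤ) := by
          rw [show (-i) + (-j) = -(i + j) by ring]
          exact hneg3 _ hij
        exact hσbrack (-i) (hneg3 i hi) (-j) (hneg3 j hj) hij' x hx y hy }
  exact Stmt2Aux.main_aux h hf hind htop hind' htop'
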